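/- In the reduction graph H built from a bipartite RBDS instance (G=(R,B;E), k): if D ⊆ B dominates R and |D| ≤ k, then S = {u} ∪ R ∪ D is a connected safe set of H of size at most s = k + |R| + 1. -/
import Mathlib


variable {V : Type*}

/-- Two vertex sets are adjacent if some edge joins them. -/
def SetsAdj (G : SimpleGraph V) (A B : Set V) : Prop :=
  ∃ a ∈ A, ∃ b ∈ B, G.Adj a b

/-- `u` and `v` are connected inside the induced subgraph `G[S]`. -/
def ReachIn (G : SimpleGraph V) (S : Set V) (u v : V) : Prop :=
  ∃ (hu : u ∈ S) (hv : v ∈ S), (G.induce S).Reachable ⟨u, hu⟩ ⟨v, hv⟩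

/-- `C` is (the vertex set of) a connected component of the induced subgraph `G[S]`. -/
def IsCompOf (G : SimpleGraph V) (S C : Set V) : Prop :=
  ∃ v ∈ S, C = {u | ReachIn G S u v}

/-- A safe set: nonempty, and no component of `G[S]` is adjacent to a larger
component of `G - S`. -/
def IsSafeSet (G : SimpleGraph V) (S : Set V) : Prop :=
  S.Nonempty ∧ ∀ C D : Set V, IsCompOf G S C → IsCompOf G Sᶜ D →
    SetsAdj G C D → D.ncard ≤ C.ncard

/-- A connected safe set. -/
def IsConnSafeSet (G : SimpleGraph V) (S : Set V) : Prop :=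
  IsSafeSet G S ∧ (G.induce S).Connected

/-- The safe number: minimum size of a safe set. -/
noncomputable def sNum (G : SimpleGraph V) : ℕ :=
  sInf {n | ∃ S : Set V, IsSafeSet G S ∧ S.ncard = n}

/-- The connected safe number: minimum size of a connected safe set. -/
noncomputable def csNum (G : SimpleGraph V) : ℕ :=
  sInf {n | ∃ S : Set V, IsConnSafeSet G S ∧ S.ncard = n}

/-- Vertices of the reduction graph `H` built from an RBDS instance `(R, B; E, k)`,
where `s` is the target safe-set size: the hub `u`, the red and blue vertices,
`2s` pendant leaves at the hub and at each red vertex, and for each red vertex a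
star `K_{1,s-1}` (a center and `s - 1` leaves). -/
inductive HVert (R B : Type*) (s : ℕ) : Type _
  | hub : HVert R B s
  | red : R → HVert R B s
  | blue : B → HVert R B s
  | pendHub : Fin (2 * s) → HVert R B s
  | pendRed : R → Fin (2 * s) → HVert R B s
  | starCenter : R → HVert R B s
  | starLeaf : R → Fin (s - 1) → HVert R B s

/-- The (one-sided) adjacency relation of the reduction graph. -/
def HRel (R B : Type*) (s : ℕ) (E : R → B → Prop) :
    HVert R B s → HVert R B s → Prop
  | .red r, .blue b => E r b
  | .hub, .blue _ => True
  | .hub, .pendHub _ => True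
  | .red r, .pendRed r' _ => r = r'
  | .red r, .starCenter r' => r = r'
  | .starCenter r, .starLeaf r' _ => r = r'
  | _, _ => False

/-- The reduction graph `H`. -/
def HGraph (R B : Type*) (s : ℕ) (E : R → B → Prop) : SimpleGraph (HVert R B s) :=
  SimpleGraph.fromRel (HRel R B s E)

section Aux

variable {R B : Type*} {s : ℕ} {E : R → B → Prop} {D : Set B}

/-- Canonical representative of the component of a vertex in `H - S`. -/
def phi : HVert R B s → HVert R B s
  | .starLeaf r _ => .starCenter r
  | .hub => .hub
  | .red r => .red r
  | .blue b => .blue b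
  | .pendHub i => .pendHub i
  | .pendRed r i => .pendRed r i
  | .starCenter r => .starCenter r

/-- The candidate safe set. -/
def SS (R B : Type*) (s : ℕ) (D : Set B) : Set (HVert R B s) :=
  {HVert.hub} ∪ HVert.red '' Set.univ ∪ HVert.blue '' D

lemma mem_SS {x : HVert R B s} :
    x ∈ SS R B s D ↔ x = .hub ∨ (∃ r, x = .red r) ∨ ∃ b ∈ D, x = .blue b := by
  simp [SS, eq_comm, or_assoc]

lemma phi_eq_of_adj {x y : HVert R B s} (hx : x ∉ SS R B s D) (hy : y ∉ SS R B s D)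
    (h : (HGraph R B s E).Adj x y) : phi x = phi y := by
  rw [HGraph, SimpleGraph.fromRel_adj] at h
  obtain ⟨-, h | h⟩ := h <;>
  · cases x <;> cases y <;> simp_all [HRel, phi, mem_SS]

lemma phi_eq_of_walk : ∀ {x y : ↥(SS R B s D)ᶜ},
    ((HGraph R B s E).induce (SS R B s D)ᶜ).Walk x y → phi (x : HVert R B s) = phi y := by
  intro x y w
  induction w with
  | nil => rfl
  | @cons a b c h _ ih =>
    exact (phi_eq_of_adj a.2 b.2 h).trans ih

lemma comp_subset_phi {v : HVert R B s} :
    {u | ReachIn (HGraph R B s E) (SS R B s D)ᶜ u v} ⊆ {u | phi u = phi v} := by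
  rintro u ⟨hu, hv, ⟨w⟩⟩
  exact phi_eq_of_walk w

lemma phi_fiber_star (r : R) :
    {u : HVert R B s | phi u = .starCenter r}
      = insert (HVert.starCenter r) (Set.range (HVert.starLeaf r)) := by
  ext u
  cases u <;> simp [phi, eq_comm]

lemma phi_fiber_star_ncard (r : R) (hs : 1 ≤ s) :
    {u : HVert R B s | phi u = .starCenter r}.ncard = s := by
  rw [phi_fiber_star]
  have hinj : Function.Injective (HVert.starLeaf r : Fin (s - 1) → HVert R B s) := by
    intro i j h; simpa using h
  rw [Set.ncard_insert_of_notMem (by simp) (Set.finite_range _), ← Set.image_univ,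
    Set.ncard_image_of_injective _ hinj, Set.ncard_univ, Nat.card_eq_fintype_card,
    Fintype.card_fin]
  omega

lemma SS_ncard [Fintype R] (hDfin : D.Finite) :
    (SS R B s D).ncard = 1 + Fintype.card R + D.ncard := by
  have hred : Function.Injective (HVert.red : R → HVert R B s) := by
    intro i j h; simpa using h
  have hblue : Function.Injective (HVert.blue : B → HVert R B s) := by
    intro i j h; simpa using h
  have fin1 : (HVert.red '' (Set.univ : Set R) : Set (HVert R B s)).Finite :=
    Set.finite_univ.image _
  have hdisj : Disjoint ({HVert.hub} ∪ HVert.red '' Set.univ : Set (HVert R B s))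
      (HVert.blue '' D) := by
    rw [Set.disjoint_left]
    rintro x (rfl | ⟨r, -, rfl⟩) ⟨b, -, h⟩ <;> simp_all
  have h1 : ({HVert.hub} ∪ HVert.red '' Set.univ : Set (HVert R B s)).ncard
      = 1 + Fintype.card R := by
    rw [Set.ncard_union_eq (by simp [Set.disjoint_left]) (Set.finite_singleton _) fin1,
      Set.ncard_singleton, Set.ncard_image_of_injective _ hred, Set.ncard_univ,
      Nat.card_eq_fintype_card]
  rw [SS, Set.ncard_union_eq hdisj ((Set.finite_singleton _).union fin1) (hDfin.image _),
    h1, Set.ncard_image_of_injective _ hblue]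

lemma SS_connected (hdom : ∀ r : R, ∃ b ∈ D, E r b) :
    ((HGraph R B s E).induce (SS R B s D)).Connected := by
  have hhub : (HVert.hub : HVert R B s) ∈ SS R B s D := by simp [mem_SS]
  have key : ∀ x : ↥(SS R B s D),
      ((HGraph R B s E).induce (SS R B s D)).Reachable x ⟨.hub, hhub⟩ := by
    rintro ⟨x, hx⟩
    rw [mem_SS] at hx
    obtain rfl | ⟨r, rfl⟩ | ⟨b, hb, rfl⟩ := hx
    · exact SimpleGraph.Reachable.refl _
    · obtain ⟨b, hb, hE⟩ := hdom r
      have hbS : (HVert.blue b : HVert R B s) ∈ SS R B s D := by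
        rw [mem_SS]; exact Or.inr (Or.inr ⟨b, hb, rfl⟩)
      have a1 : ((HGraph R B s E).induce (SS R B s D)).Adj
          ⟨.red r, by rw [mem_SS]; exact Or.inr (Or.inl ⟨r, rfl⟩)⟩ ⟨.blue b, hbS⟩ := by
        show (HGraph R B s E).Adj _ _
        rw [HGraph, SimpleGraph.fromRel_adj]
        exact ⟨by simp, Or.inl hE⟩
      have a2 : ((HGraph R B s E).induce (SS R B s D)).Adj
          ⟨.blue b, hbS⟩ ⟨.hub, hhub⟩ := by
        show (HGraph R B s E).Adj _ _
        rw [HGraph, SimpleGraph.fromRel_adj]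
        exact ⟨by simp, Or.inr trivial⟩
      exact (a1.reachable).trans a2.reachable
    · have hbS : (HVert.blue b : HVert R B s) ∈ SS R B s D := by
        rw [mem_SS]; exact Or.inr (Or.inr ⟨b, hb, rfl⟩)
      have a2 : ((HGraph R B s E).induce (SS R B s D)).Adj
          ⟨.blue b, hbS⟩ ⟨.hub, hhub⟩ := by
        show (HGraph R B s E).Adj _ _
        rw [HGraph, SimpleGraph.fromRel_adj]
        exact ⟨by simp, Or.inr trivial⟩
      exact a2.reachable
  have : Nonempty ↥(SS R B s D) := ⟨⟨.hub, hhub⟩⟩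
  exact ⟨fun x y => (key x).trans (key y).symm⟩

lemma comp_of_SS_eq (hdom : ∀ r : R, ∃ b ∈ D, E r b) {C : Set (HVert R B s)}
    (hC : IsCompOf (HGraph R B s E) (SS R B s D) C) : C = SS R B s D := by
  obtain ⟨v, hv, rfl⟩ := hC
  ext u
  constructor
  · rintro ⟨hu, -, -⟩; exact hu
  · intro hu
    exact ⟨hu, hv, (SS_connected hdom).preconnected _ _⟩

end Aux

theorem stmt10 {R B : Type*} [Fintype R] [Fintype B] (E : R → B → Prop) (k : ℕ)
    (hk : k < Fintype.card R) (D : Set B)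
    (hdom : ∀ r : R, ∃ b ∈ D, E r b) (hD : D.ncard = k) :
    IsConnSafeSet (HGraph R B (k + Fintype.card R + 1) E)
      ({HVert.hub} ∪ HVert.red '' Set.univ ∪ HVert.blue '' D) ∧
    ({HVert.hub} ∪ HVert.red '' Set.univ ∪ HVert.blue '' D :
        Set (HVert R B (k + Fintype.card R + 1))).ncard
      ≤ k + Fintype.card R + 1 := by
  set s := k + Fintype.card R + 1 with hs
  have hs1 : 1 ≤ s := by omega
  have hSdef : ({HVert.hub} ∪ HVert.red '' Set.univ ∪ HVert.blue '' D :
      Set (HVert R B s)) = SS R B s D := rfl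
  have hcard : (SS R B s D).ncard = s := by
    rw [SS_ncard (Set.toFinite D), hD]; omega
  rw [hSdef]
  refine ⟨⟨⟨⟨.hub, by simp [mem_SS]⟩, ?_⟩, SS_connected hdom⟩, le_of_eq hcard⟩
  intro C D' hC hD' _
  rw [comp_of_SS_eq hdom hC, hcard]
  obtain ⟨v, hv, rfl⟩ := hD'
  have hsub : {u | ReachIn (HGraph R B s E) (SS R B s D)ᶜ u v} ⊆ {u | phi u = phi v} :=
    comp_subset_phi
  have hvS : v ∉ SS R B s D := hv
  -- bound the fiber of phi
  rcases v with _ | r | b | i | ⟨r, i⟩ | r | ⟨r, i⟩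
  · exact absurd (by simp [mem_SS]) hvS
  · exact absurd (by rw [mem_SS]; exact Or.inr (Or.inl ⟨r, rfl⟩)) hvS
  · -- isolated blue vertex
    have : {u : HVert R B s | phi u = phi (.blue b)} = {.blue b} := by
      ext u; cases u <;> simp [phi]
    calc _ ≤ ({HVert.blue b} : Set (HVert R B s)).ncard :=
            Set.ncard_le_ncard (this ▸ hsub) (Set.finite_singleton _)
      _ ≤ s := by rw [Set.ncard_singleton]; exact hs1
  · have : {u : HVert R B s | phi u = phi (.pendHub i)} = {.pendHub i} := by
      ext u; cases u <;> simp [phi]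
    calc _ ≤ ({HVert.pendHub i} : Set (HVert R B s)).ncard :=
            Set.ncard_le_ncard (this ▸ hsub) (Set.finite_singleton _)
      _ ≤ s := by rw [Set.ncard_singleton]; exact hs1
  · have : {u : HVert R B s | phi u = phi (.pendRed r i)} = {.pendRed r i} := by
      ext u; cases u <;> simp [phi]
    calc _ ≤ ({HVert.pendRed r i} : Set (HVert R B s)).ncard :=
            Set.ncard_le_ncard (this ▸ hsub) (Set.finite_singleton _)
      _ ≤ s := by rw [Set.ncard_singleton]; exact hs1
  · have hfin : ({u : HVert R B s | phi u = .starCenter r}).Finite := by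
      rw [phi_fiber_star]
      exact (Set.finite_range _).insert _
    calc _ ≤ ({u : HVert R B s | phi u = .starCenter r}).ncard :=
            Set.ncard_le_ncard (by simpa [phi] using hsub) hfin
      _ = s := phi_fiber_star_ncard r hs1
  · have hfin : ({u : HVert R B s | phi u = .starCenter r}).Finite := by
      rw [phi_fiber_star]
      exact (Set.finite_range _).insert _
    calc _ ≤ ({u : HVert R B s | phi u = .starCenter r}).ncard :=
            Set.ncard_le_ncard (by simpa [phi] using hsub) hfin
      _ = s := phi_fiber_star_ncard r hs1
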